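/- Let n ≥ 2 and let h : ℝ → ℝ be continuous, strictly positive, and even (h(−θ) = h(θ)). Set M := ∫_{−π/n}^{π/n} h(θ) dθ. Define the centroid functions C⁺(c) := (∫_{−π/n}^{c/2} θ h(θ) dθ) / (∫_{−π/n}^{c/2} h(θ) dθ) and C⁻(a) := (∫_{a/2}^{π/n} θ h(θ) dθ) / (∫_{a/2}^{π/n} h(θ) dθ). Then C⁺ is differentiable at c = 2π/n with derivative (C⁺)′(2π/n) = (π/(2n)) · h(π/n)/M, and C⁻ is differentiable at a = −2π/n with derivative (C⁻)′(−2π/n) = (π/(2n)) · h(π/n)/M. (These are the off-diagonal entries β = (π/(2nM)) h(π/n) of the Jacobian of the Lloyd map at the symmetric configuration: the derivative of the centroid of the Voronoi cell of the codepoint 0 with respect to the positions of its right neighbor at c and left neighbor at a.) -/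

import Mathlib

open MeasureTheory intervalIntegral Real

private lemma odd_int_zero (g : ℝ → ℝ) (hodd : ∀ x, g (-x) = -g x) (a : ℝ) :
    (∫ θ in (-a)..a, g θ) = 0 := by
  have h1 : (∫ x in (-a)..a, g (-x)) = ∫ x in (-a)..a, g x := by
    rw [intervalIntegral.integral_comp_neg]; rw [neg_neg]
  have h2 : (∫ x in (-a)..a, g (-x)) = -∫ x in (-a)..a, g x := by
    simp only [hodd]; exact intervalIntegral.integral_neg
  linarith [h1, h2]

private lemma deriv_half (f : ℝ → ℝ) (hf : Continuous f) (a c₀ : ℝ) :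
    HasDerivAt (fun c => ∫ θ in a..(c / 2), f θ) (f (c₀ / 2) * (1 / 2)) c₀ := by
  have hF : HasDerivAt (fun u => ∫ θ in a..u, f θ) (f (c₀ / 2)) (c₀ / 2) :=
    intervalIntegral.integral_hasDerivAt_right (hf.intervalIntegrable _ _)
      hf.aestronglyMeasurable.stronglyMeasurableAtFilter hf.continuousAt
  have hg : HasDerivAt (fun c : ℝ => c / 2) (1 / 2) c₀ := by
    simpa using (hasDerivAt_id c₀).div_const 2
  exact hF.comp c₀ hg

private lemma deriv_half' (f : ℝ → ℝ) (hf : Continuous f) (b a₀ : ℝ) :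
    HasDerivAt (fun a => ∫ θ in (a / 2)..b, f θ) (-(f (a₀ / 2) * (1 / 2))) a₀ := by
  have := (deriv_half f hf b a₀).neg
  refine this.congr_of_eventuallyEq (Filter.Eventually.of_forall fun a => ?_)
  simp only [Pi.neg_apply, ← intervalIntegral.integral_symm]

theorem stmt_8 (n : ℕ) (hn : 2 ≤ n) (h : ℝ → ℝ) (hc : Continuous h)
    (hpos : ∀ θ : ℝ, 0 < h θ) (heven : ∀ θ : ℝ, h (-θ) = h θ)
    (M : ℝ) (hM : M = ∫ θ in (-(Real.pi / n))..(Real.pi / n), h θ)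
    (Cplus Cminus : ℝ → ℝ)
    (hCp : ∀ c : ℝ, Cplus c =
      (∫ θ in (-(Real.pi / n))..(c / 2), θ * h θ) /
      (∫ θ in (-(Real.pi / n))..(c / 2), h θ))
    (hCm : ∀ a : ℝ, Cminus a =
      (∫ θ in (a / 2)..(Real.pi / n), θ * h θ) /
      (∫ θ in (a / 2)..(Real.pi / n), h θ)) :
    HasDerivAt Cplus (Real.pi / (2 * n) * h (Real.pi / n) / M) (2 * Real.pi / n) ∧
      HasDerivAt Cminus (Real.pi / (2 * n) * h (Real.pi / n) / M) (-(2 * Real.pi / n)) := by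
  have hn0 : (0:ℝ) < n := by positivity
  have hpin : 0 < Real.pi / n := by positivity
  have hMpos : 0 < M := by
    rw [hM]
    apply intervalIntegral.intervalIntegral_pos_of_pos (hc.intervalIntegrable _ _) hpos
    linarith
  have hg : Continuous (fun θ : ℝ => θ * h θ) := continuous_id.mul hc
  have hodd : ∀ x : ℝ, (-x) * h (-x) = -(x * h x) := by
    intro x; rw [heven]; ring
  -- half points
  have hhalf1 : (2 * Real.pi / n) / 2 = Real.pi / n := by ring
  have hhalf2 : (-(2 * Real.pi / n)) / 2 = -(Real.pi / n) := by ring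
  have hNzero : (∫ θ in (-(Real.pi / n))..(Real.pi / n), θ * h θ) = 0 :=
    odd_int_zero _ hodd _
  have hderiv_val : Real.pi / (2 * n) * h (Real.pi / n) / M =
      ((Real.pi / n) * h (Real.pi / n) * (1 / 2) * M -
        0 * (h (Real.pi / n) * (1 / 2))) / M ^ 2 := by
    field_simp
    ring
  constructor
  · -- Cplus
    have hN : HasDerivAt (fun c => ∫ θ in (-(Real.pi / n))..(c / 2), θ * h θ)
        ((Real.pi / n) * h (Real.pi / n) * (1 / 2)) (2 * Real.pi / n) := by
      have := deriv_half (fun θ => θ * h θ) hg (-(Real.pi / n)) (2 * Real.pi / n)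
      rwa [hhalf1] at this
    have hD : HasDerivAt (fun c => ∫ θ in (-(Real.pi / n))..(c / 2), h θ)
        (h (Real.pi / n) * (1 / 2)) (2 * Real.pi / n) := by
      have := deriv_half h hc (-(Real.pi / n)) (2 * Real.pi / n)
      rwa [hhalf1] at this
    have hDne : (∫ θ in (-(Real.pi / n))..((2 * Real.pi / n) / 2), h θ) ≠ 0 := by
      rw [hhalf1, ← hM]; exact ne_of_gt hMpos
    have := hN.div hD hDne
    rw [hhalf1, hNzero, ← hM] at this
    rw [← hderiv_val] at this
    exact this.congr_of_eventuallyEq (Filter.Eventually.of_forall fun c => (hCp c))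
  · -- Cminus
    have hN : HasDerivAt (fun a => ∫ θ in (a / 2)..(Real.pi / n), θ * h θ)
        (-((-(Real.pi / n)) * h (-(Real.pi / n)) * (1 / 2))) (-(2 * Real.pi / n)) := by
      have := deriv_half' (fun θ => θ * h θ) hg (Real.pi / n) (-(2 * Real.pi / n))
      rwa [hhalf2] at this
    have hN' : HasDerivAt (fun a => ∫ θ in (a / 2)..(Real.pi / n), θ * h θ)
        ((Real.pi / n) * h (Real.pi / n) * (1 / 2)) (-(2 * Real.pi / n)) := by
      convert hN using 1
      rw [heven]; ring
    have hD : HasDerivAt (fun a => ∫ θ in (a / 2)..(Real.pi / n), h θ)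
        (-(h (-(Real.pi / n)) * (1 / 2))) (-(2 * Real.pi / n)) := by
      have := deriv_half' h hc (Real.pi / n) (-(2 * Real.pi / n))
      rwa [hhalf2] at this
    have hDval : (∫ θ in ((-(2 * Real.pi / n)) / 2)..(Real.pi / n), h θ) = M := by
      rw [hhalf2, ← hM]
    have hDne : (∫ θ in ((-(2 * Real.pi / n)) / 2)..(Real.pi / n), h θ) ≠ 0 := by
      rw [hDval]; exact ne_of_gt hMpos
    have := hN'.div hD hDne
    rw [hDval, hhalf2, hNzero] at this
    have hderiv_val2 : Real.pi / (2 * n) * h (Real.pi / n) / M =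
        ((Real.pi / n) * h (Real.pi / n) * (1 / 2) * M -
          0 * -(h (-(Real.pi / n)) * (1 / 2))) / M ^ 2 := by
      field_simp
      ring
    rw [← hderiv_val2] at this
    exact this.congr_of_eventuallyEq (Filter.Eventually.of_forall fun a => (hCm a))
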